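/- Let A be a complex N × N matrix whose spectrum does not intersect the imaginary axis, i.e. no eigenvalue λ of A satisfies Re λ = 0. Let x : ℝ → ℂ^N be differentiable with x′(t) = A x(t) for all t ∈ ℝ, and suppose x is bounded on ℝ. Then x(t) = 0 for all t ∈ ℝ. -/

import Mathlib

open Complex Matrix

/-- A bounded solution of the scalar ODE `g' = λ g` with `Re λ ≠ 0` is zero. -/
lemma scalar_bounded_zero (lam : ℂ) (hlam : lam.re ≠ 0) (g : ℝ → ℂ)
    (hg : ∀ t, HasDerivAt g (lam * g t) t) (C : ℝ) (hb : ∀ t, ‖g t‖ ≤ C) :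
    ∀ t, g t = 0 := by
  have hexp : ∀ c : ℂ, ∀ t : ℝ, HasDerivAt (fun s : ℝ => Complex.exp (c * s))
      (c * Complex.exp (c * t)) t := by
    intro c t
    have h1 : HasDerivAt (fun s : ℝ => c * (s : ℂ)) c t := by
      simpa using (Complex.ofRealCLM.hasDerivAt (x := t)).const_mul c
    simpa [mul_comm] using h1.cexp
  have hderiv : ∀ t, HasDerivAt (fun s : ℝ => Complex.exp (-lam * s) * g s) 0 t := by
    intro t
    have : HasDerivAt (fun s : ℝ => Complex.exp (-lam * s) * g s) _ t := (hexp (-lam) t).mul (hg t)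
    convert this using 1
    ring
  have hconst : ∀ t : ℝ, Complex.exp (-lam * t) * g t = g 0 := by
    intro t
    have h := is_const_of_deriv_eq_zero (f := fun s : ℝ => Complex.exp (-lam * s) * g s)
      (fun s => (hderiv s).differentiableAt) (fun s => (hderiv s).deriv) t 0
    simpa using h
  have hgt : ∀ t : ℝ, g t = Complex.exp (lam * t) * g 0 := by
    intro t
    have h := hconst t
    have hne : Complex.exp (-lam * t) ≠ 0 := Complex.exp_ne_zero _
    rw [← h, ← mul_assoc, ← Complex.exp_add]
    simp
  have hnorm : ∀ t : ℝ, Real.exp (lam.re * t) * ‖g 0‖ ≤ C := by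
    intro t
    have := hb t
    rw [hgt t] at this
    simpa [norm_mul, Complex.norm_exp, mul_comm] using this
  have h0 : g 0 = 0 := by
    by_contra h0
    have hpos : 0 < ‖g 0‖ := norm_pos_iff.mpr h0
    have hCpos : 0 < (C + 1) / ‖g 0‖ := by
      have : 0 ≤ C := le_trans (norm_nonneg _) (hb 0)
      positivity
    set t : ℝ := Real.log ((C + 1) / ‖g 0‖) / lam.re with ht
    have : Real.exp (lam.re * t) = (C + 1) / ‖g 0‖ := by
      rw [ht, mul_div_cancel₀ _ hlam, Real.exp_log hCpos]
    have hle := hnorm t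
    rw [this, div_mul_cancel₀ _ (ne_of_gt hpos)] at hle
    linarith
  intro t
  rw [hgt t, h0, mul_zero]


lemma hasEigenvalue_of_dualMap {V : Type} [AddCommGroup V] [Module ℂ V]
    [FiniteDimensional ℂ V] (f : Module.End ℂ V) (μ : ℂ)
    (h : Module.End.HasEigenvalue (f.dualMap : Module.End ℂ (Module.Dual ℂ V)) μ) :
    Module.End.HasEigenvalue f μ := by
  obtain ⟨w, hw⟩ := h.exists_hasEigenvector
  by_contra hcon
  have h1 : LinearMap.ker (f - μ • 1) = ⊥ := by
    rw [← Module.End.eigenspace_def]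
    simpa [Module.End.hasEigenvalue_iff, not_not] using hcon
  have hinj : Function.Injective (f - μ • (1 : Module.End ℂ V)) := LinearMap.ker_eq_bot.mp h1
  have hsurj : Function.Surjective (f - μ • (1 : Module.End ℂ V)) :=
    (LinearMap.injective_iff_surjective).mp hinj
  have hdinj : Function.Injective (f - μ • (1 : Module.End ℂ V)).dualMap :=
    LinearMap.dualMap_injective_of_surjective hsurj
  apply hw.2
  apply hdinj
  have happ : (f - μ • (1 : Module.End ℂ V)).dualMap w = f.dualMap w - μ • w := by
    ext v
    simp [LinearMap.dualMap_apply, mul_comm]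
  rw [happ, hw.apply_eq_smul]
  simp

lemma aux_bounded_zero : ∀ (n : ℕ) (V : Type) [NormedAddCommGroup V] [NormedSpace ℂ V]
    [FiniteDimensional ℂ V], Module.finrank ℂ V = n →
    ∀ (f : V →ₗ[ℂ] V), (∀ μ : ℂ, Module.End.HasEigenvalue f μ → μ.re ≠ 0) →
    ∀ (x : ℝ → V), (∀ t, HasDerivAt x (f (x t)) t) →
    ∀ C : ℝ, (∀ t, ‖x t‖ ≤ C) → ∀ t, x t = 0 := by
  intro n
  induction n with
  | zero =>
    intro V _ _ _ hdim f _ x _ C _ t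
    have : Subsingleton V := Module.finrank_zero_iff.mp hdim
    exact Subsingleton.elim _ _
  | succ n ih =>
    intro V _ _ _ hdim f hspec x hx C hC
    have hpos : 0 < Module.finrank ℂ V := by rw [hdim]; exact Nat.succ_pos n
    have hnt : Nontrivial V := Module.finrank_pos_iff.mp hpos
    have hntd : Nontrivial (Module.Dual ℂ V) := inferInstance
    obtain ⟨μ, hμ⟩ := Module.End.exists_eigenvalue
      (f.dualMap : Module.End ℂ (Module.Dual ℂ V))
    have hre : μ.re ≠ 0 := hspec μ (hasEigenvalue_of_dualMap f μ hμ)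
    obtain ⟨w, hw⟩ := hμ.exists_hasEigenvector
    have hwf : ∀ v : V, w (f v) = μ * w v := by
      intro v
      have h := hw.apply_eq_smul
      calc w (f v) = (f.dualMap w) v := rfl
        _ = (μ • w) v := by rw [h]
        _ = μ * w v := rfl
    set wc := (LinearMap.toContinuousLinearMap w).restrictScalars ℝ with hwc
    have hg : ∀ t, HasDerivAt (fun t => w (x t)) (μ * w (x t)) t := by
      intro t
      have h := (wc.hasFDerivAt (x := x t)).comp_hasDerivAt t (hx t)
      simpa [Function.comp_def, hwc, hwf, ContinuousLinearMap.coe_restrictScalars',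
        LinearMap.coe_toContinuousLinearMap'] using h
    have hgb : ∀ t, ‖w (x t)‖ ≤ ‖wc‖ * C := by
      intro t
      calc ‖w (x t)‖ = ‖wc (x t)‖ := rfl
        _ ≤ ‖wc‖ * ‖x t‖ := wc.le_opNorm _
        _ ≤ ‖wc‖ * C := mul_le_mul_of_nonneg_left (hC t) (norm_nonneg _)
    have hg0 : ∀ t, w (x t) = 0 := scalar_bounded_zero μ hre _ hg _ hgb
    set W := LinearMap.ker w with hWdef
    have hxW : ∀ t, x t ∈ W := fun t => LinearMap.mem_ker.mpr (hg0 t)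
    have hinv : ∀ v ∈ W, f v ∈ W := by
      intro v hv
      rw [hWdef, LinearMap.mem_ker] at hv ⊢
      rw [hwf, hv, mul_zero]
    have hdimW : Module.finrank ℂ W = n := by
      have hr := Module.Dual.finrank_ker_add_one_of_ne_zero hw.2
      rw [← hWdef, hdim] at hr
      omega
    obtain ⟨π, hπ⟩ := (W.subtype).exists_leftInverse_of_injective W.ker_subtype
    have hπ' : ∀ (v : V) (hv : v ∈ W), π v = ⟨v, hv⟩ := by
      intro v hv
      have := DFunLike.congr_fun hπ (⟨v, hv⟩ : W)
      simpa using this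
    set f' : W →ₗ[ℂ] W := f.restrict hinv with hf'
    set y : ℝ → W := fun t => π (x t) with hy
    have hycoe : ∀ t, (y t : V) = x t := by
      intro t
      rw [hy]
      simp [hπ' (x t) (hxW t)]
    have hyder : ∀ t, HasDerivAt y (f' (y t)) t := by
      intro t
      have h := (((LinearMap.toContinuousLinearMap π).restrictScalars ℝ).hasFDerivAt
        (x := x t)).comp_hasDerivAt t (hx t)
      have heq : π (f (x t)) = f' (y t) := by
        have h1 : f (x t) ∈ W := hinv _ (hxW t)
        rw [hπ' _ h1]
        apply Subtype.ext
        simp [hf', LinearMap.restrict_apply, hycoe t]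
      simpa [Function.comp_def, ContinuousLinearMap.coe_restrictScalars',
        LinearMap.coe_toContinuousLinearMap', heq, hy] using h
    have hyb : ∀ t, ‖y t‖ ≤ C := by
      intro t
      calc ‖y t‖ = ‖(y t : V)‖ := rfl
        _ ≤ C := by rw [hycoe t]; exact hC t
    have hspec' : ∀ μ' : ℂ, Module.End.HasEigenvalue f' μ' → μ'.re ≠ 0 := by
      intro μ' hμ'
      apply hspec
      obtain ⟨v, hv⟩ := hμ'.exists_hasEigenvector
      have h1 : f (v : V) = μ' • (v : V) := by
        have := hv.apply_eq_smul
        have := congrArg (Subtype.val) this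
        simpa [hf', LinearMap.restrict_apply] using this
      refine Module.End.hasEigenvalue_of_hasEigenvector
        (x := (v : V)) ⟨Module.End.mem_eigenspace_iff.mpr h1, ?_⟩
      simpa using hv.2
    intro t
    have := ih W hdimW f' hspec' y hyder C hyb t
    rw [← hycoe t, this, Submodule.coe_zero]

/-- If no eigenvalue of the complex `N × N` matrix `A` (i.e. no root of its characteristic
polynomial) lies on the imaginary axis, then every bounded differentiable solution
`x : ℝ → ℂ^N` of `x′(t) = A x(t)` is identically zero. -/
theorem bounded_solution_of_homogeneous_eq_zero
    (N : ℕ) (A : Matrix (Fin N) (Fin N) ℂ)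
    (hspec : ∀ lam : ℂ, A.charpoly.eval lam = 0 → lam.re ≠ 0)
    (x : ℝ → (Fin N → ℂ))
    (hx : ∀ t : ℝ, HasDerivAt x (A.mulVec (x t)) t)
    (hbdd : ∃ C : ℝ, ∀ t : ℝ, ‖x t‖ ≤ C) :
    ∀ t : ℝ, x t = 0 := by
  obtain ⟨C, hC⟩ := hbdd
  have hspec' : ∀ μ : ℂ, Module.End.HasEigenvalue (A.mulVecLin : Module.End ℂ (Fin N → ℂ)) μ →
      μ.re ≠ 0 := by
    intro μ hμ
    apply hspec
    obtain ⟨v, hv⟩ := hμ.exists_hasEigenvector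
    have hAv : A.mulVec v = μ • v := by
      have := hv.apply_eq_smul
      simpa [Matrix.mulVecLin_apply] using this
    have hdet : (μ • (1 : Matrix (Fin N) (Fin N) ℂ) - A).det = 0 := by
      rw [← Matrix.exists_mulVec_eq_zero_iff]
      refine ⟨v, hv.2, ?_⟩
      rw [Matrix.sub_mulVec, Matrix.smul_mulVec, Matrix.one_mulVec, hAv, sub_self]
    have heval : A.charpoly.eval μ = (μ • (1 : Matrix (Fin N) (Fin N) ℂ) - A).det := by
      rw [Matrix.charpoly, ← Polynomial.coe_evalRingHom, RingHom.map_det]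
      congr 1
      ext i j
      by_cases h : i = j
      · subst h
        simp [Matrix.charmatrix_apply_eq, Matrix.one_apply, Matrix.smul_apply]
      · simp [Matrix.charmatrix_apply_ne _ _ _ h, Matrix.one_apply_ne h, Matrix.smul_apply,
          Matrix.sub_apply]
    rw [heval, hdet]
  have hx' : ∀ t : ℝ, HasDerivAt x ((A.mulVecLin : (Fin N → ℂ) →ₗ[ℂ] (Fin N → ℂ)) (x t)) t := by
    intro t
    simpa [Matrix.mulVecLin_apply] using hx t
  exact aux_bounded_zero N (Fin N → ℂ) (by simp) A.mulVecLin hspec' x hx' C hC
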